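/- Let L be a list of Booleans that is cyclically bimodal (such a list records, in cyclic order, the in/out directions of the edges around a bimodal vertex of a plane digraph). Then every cyclic arc of L, i.e. every list of the form (L.rotate n).take m, has at least one configuration in C; equivalently, the destutter of every such arc is a sublist of [o,i,o] or of [i,o,i]. -/

import Mathlib

/-- Edge directions at a vertex: `true` = incoming (`i`), `false` = outgoing (`o`).
The configuration set `C = {[i], [o], [i,o], [o,i], [o,i,o], [i,o,i]}`. -/
def Config : Set (List Bool) :=
  {[true], [false], [true, false], [false, true],
    [false, true, false], [true, false, true]}

/-- A list, viewed as a cyclic sequence, is cyclically bimodal if the destutter of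
some rotation has length at most `2`. -/
def CyclicallyBimodal (L : List Bool) : Prop :=
  ∃ n : ℕ, (List.destutter (· ≠ ·) (L.rotate n)).length ≤ 2

namespace CycArcAux

def g (a : Bool) (l : List Bool) : ℕ := (List.destutter' (· ≠ ·) a l).length
def f (l : List Bool) : ℕ := (List.destutter (· ≠ ·) l).length

lemma f_cons (a : Bool) (l : List Bool) : f (a :: l) = g a l := by
  unfold f g; rw [List.destutter_cons']

lemma g_cons (a b : Bool) (l : List Bool) :
    g a (b :: l) = if a ≠ b then 1 + g b l else g a l := by
  unfold g; rw [List.destutter'_cons]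
  split_ifs with h
  · rw [List.length_cons]; omega
  · rfl

lemma one_le_g (a : Bool) (l : List Bool) : 1 ≤ g a l :=
  List.length_pos_iff.mpr (List.destutter'_ne_nil l (· ≠ ·))

lemma f_le_g (a : Bool) (l : List Bool) : f l ≤ g a l ∧ g a l ≤ f l + 1 := by
  cases l with
  | nil =>
    unfold f g
    rw [List.destutter_nil, List.destutter'_nil]
    simp
  | cons b l =>
    rw [f_cons, g_cons]
    split_ifs with h
    · omega
    · push_neg at h; subst h; omega

lemma g_append (y : List Bool) : ∀ (x : List Bool) (a : Bool),
    g a (x ++ y) ≤ g a x + f y ∧ g a x + f y ≤ g a (x ++ y) + 1 := by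
  intro x
  induction x with
  | nil =>
    intro a
    rw [List.nil_append]
    have h1 := f_le_g a y
    have h2 : g a ([] : List Bool) = 1 := by
      unfold g; rw [List.destutter'_nil]; rfl
    omega
  | cons b x ih =>
    intro a
    rw [List.cons_append, g_cons, g_cons]
    split_ifs with h
    · have := ih b; omega
    · exact ih a

lemma f_append_comm (x y : List Bool) : f (y ++ x) ≤ f (x ++ y) + 1 := by
  have h1 : f x + f y ≤ f (x ++ y) + 1 := by
    cases x with
    | nil =>
      have : f ([] : List Bool) = 0 := by unfold f; rw [List.destutter_nil]; rfl
      rw [List.nil_append]; omega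
    | cons a x =>
      have := (g_append y x a).2
      rw [List.cons_append, f_cons, f_cons]
      omega
  have h2 : f (y ++ x) ≤ f y + f x := by
    cases y with
    | nil =>
      have : f ([] : List Bool) = 0 := by unfold f; rw [List.destutter_nil]; rfl
      rw [List.nil_append]; omega
    | cons a y =>
      have := (g_append x y a).1
      rw [List.cons_append, f_cons, f_cons]
      omega
  omega

lemma f_rotate (l : List Bool) (n : ℕ) : f (l.rotate n) ≤ f l + 1 := by
  rcases eq_or_ne l [] with rfl | hne
  · rw [List.rotate_nil]; omega
  · have hpos : 0 < l.length := List.length_pos_iff.mpr hne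
    rw [← List.rotate_mod]
    rw [List.rotate_eq_drop_append_take (le_of_lt (Nat.mod_lt _ hpos))]
    calc f (l.drop (n % l.length) ++ l.take (n % l.length))
        ≤ f (l.take (n % l.length) ++ l.drop (n % l.length)) + 1 := f_append_comm _ _
      _ = f l + 1 := by rw [List.take_append_drop]

lemma g_take (l : List Bool) : ∀ (m : ℕ) (a : Bool), g a (l.take m) ≤ g a l := by
  induction l with
  | nil => intro m a; rw [List.take_nil]
  | cons b l ih =>
    intro m a
    cases m with
    | zero =>
      rw [List.take_zero]
      have h2 : g a ([] : List Bool) = 1 := by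
        unfold g; rw [List.destutter'_nil]; rfl
      have := one_le_g a (b :: l)
      omega
    | succ m =>
      rw [List.take_succ_cons, g_cons, g_cons]
      split_ifs with h
      · have := ih m b; omega
      · exact ih m a

lemma f_take (l : List Bool) (m : ℕ) : f (l.take m) ≤ f l := by
  cases l with
  | nil => rw [List.take_nil]
  | cons a l =>
    cases m with
    | zero =>
      have : f ([] : List Bool) = 0 := by unfold f; rw [List.destutter_nil]; rfl
      rw [List.take_zero]; omega
    | succ m =>
      rw [List.take_succ_cons, f_cons, f_cons]
      exact g_take l m a

lemma chain_short (l : List Bool) (hc : l.Chain' (· ≠ ·)) (hl : l.length ≤ 3) :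
    l.Sublist [false, true, false] ∨ l.Sublist [true, false, true] := by
  match l with
  | [] => exact Or.inl (List.nil_sublist _)
  | [a] =>
    cases a
    · exact Or.inl (by decide)
    · exact Or.inr (by decide)
  | [a, b] =>
    rcases hc with _ | _ | ⟨hab, -⟩
    cases a <;> cases b <;> first
      | exact absurd rfl hab
      | exact Or.inl (by decide)
  | [a, b, c] =>
    rcases hc with _ | _ | ⟨hab, hc'⟩
    rcases hc' with _ | _ | ⟨hbc, -⟩
    cases a <;> cases b <;> cases c <;> first
      | exact absurd rfl hab
      | exact absurd rfl hbc
      | exact Or.inl (by decide)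
      | exact Or.inr (by decide)
  | a :: b :: c :: d :: l => simp at hl; omega

end CycArcAux

open CycArcAux in
/-- If `L` is cyclically bimodal then every cyclic arc `(L.rotate n).take m` has at
least one configuration in `C`; equivalently, its destutter is a sublist of
`[o,i,o]` or of `[i,o,i]`. -/
theorem cyclic_arc_has_configuration (L : List Bool) (hL : CyclicallyBimodal L)
    (n m : ℕ) :
    (∃ X ∈ Config, (List.destutter (· ≠ ·) ((L.rotate n).take m)).Sublist X) ∧
      ((List.destutter (· ≠ ·) ((L.rotate n).take m)).Sublist [false, true, false] ∨
        (List.destutter (· ≠ ·) ((L.rotate n).take m)).Sublist [true, false, true]) := by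
  obtain ⟨k, hk⟩ := hL
  have hlen : f ((L.rotate n).take m) ≤ 3 := by
    have h1 : f ((L.rotate n).take m) ≤ f (L.rotate n) := f_take _ m
    have h2 : f (L.rotate n) ≤ 3 := by
      rcases eq_or_ne L [] with rfl | hne
      · rw [List.rotate_nil]
        have : f ([] : List Bool) = 0 := by unfold f; rw [List.destutter_nil]; rfl
        omega
      · have hpos : 0 < L.length := List.length_pos_iff.mpr hne
        have hrot : L.rotate n = (L.rotate k).rotate (L.length - k % L.length + n) := by
          rw [List.rotate_rotate]
          rw [← List.rotate_mod L n,
            ← List.rotate_mod L (k + (L.length - k % L.length + n))]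
          congr 1
          have h4 := Nat.mod_add_div k L.length
          have h5 := Nat.mod_lt k hpos
          have h3 : k + (L.length - k % L.length + n)
              = L.length * (k / L.length + 1) + n := by
            rw [Nat.mul_add, Nat.mul_one]; omega
          rw [h3, Nat.mul_add_mod]
        rw [hrot]
        have := f_rotate (L.rotate k) (L.length - k % L.length + n)
        have hk' : f (L.rotate k) ≤ 2 := hk
        omega
    omega
  have hchain := List.isChain_destutter (· ≠ ·) ((L.rotate n).take m)
  have hmain := chain_short _ hchain hlen
  refine ⟨?_, hmain⟩
  rcases hmain with h | h
  · exact ⟨[false, true, false], by simp [Config], h⟩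
  · exact ⟨[true, false, true], by simp [Config], h⟩
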